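/- arXiv:1710.01604 — 4 statements merged into one kernel-verified Lean document; each statement's English description precedes it below -/
import Mathlib

section
/- Given constants D > 0 and κ_a > 0, define φ(τ) = κ_a/√(πDτ) − (κ_a²/D)·erfcx(κ_a·√(τ/D)) for τ > 0. Then for every T > 0, φ is integrable on (0,T) and ∫_0^T φ(τ) dτ = 1 − erfcx(κ_a·√(T/D)). -/
open Real MeasureTheory Set

/-- The complementary error function `erfc x = (2/√π) ∫_x^∞ e^{-t²} dt`. -/
noncomputable def erfc (x : ℝ) : ℝ := (2 / Real.sqrt π) * ∫ t in Set.Ioi x, Real.exp (-t ^ 2)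

/-- The scaled complementary error function `erfcx x = e^{x²} erfc x`. -/
noncomputable def erfcx (x : ℝ) : ℝ := Real.exp (x ^ 2) * erfc x

/-- The first-adsorption-time density
`φ(τ) = κ_a/√(πDτ) − (κ_a²/D) erfcx(κ_a √(τ/D))`. -/
noncomputable def phi (D κa τ : ℝ) : ℝ :=
  κa / Real.sqrt (π * D * τ) - (κa ^ 2 / D) * erfcx (κa * Real.sqrt (τ / D))

lemma gauss_integrable : Integrable (fun t : ℝ => Real.exp (-t ^ 2)) := by
  have := integrable_exp_neg_mul_sq (b := 1) one_pos
  simpa using this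

lemma erfc_eq (x : ℝ) (hx : 0 ≤ x) :
    erfc x = erfc 0 - (2 / Real.sqrt π) * ∫ t in (0:ℝ)..x, Real.exp (-t ^ 2) := by
  unfold erfc
  rw [intervalIntegral.integral_of_le hx]
  have hu := MeasureTheory.setIntegral_union (μ := volume)
      (f := fun t : ℝ => Real.exp (-t ^ 2)) (s := Set.Ioc 0 x) (t := Set.Ioi x)
      Set.Ioc_disjoint_Ioi_same measurableSet_Ioi
      gauss_integrable.integrableOn gauss_integrable.integrableOn
  rw [Set.Ioc_union_Ioi_eq_Ioi hx] at hu
  rw [hu]; ring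

lemma erfc_zero : erfc 0 = 1 := by
  have h := integral_gaussian_Ioi 1
  simp only [neg_mul, one_mul, div_one] at h
  unfold erfc
  rw [h]
  have hπ : Real.sqrt π ≠ 0 := ne_of_gt (Real.sqrt_pos.mpr Real.pi_pos)
  field_simp

lemma erfcx_zero : erfcx 0 = 1 := by
  unfold erfcx
  simp [erfc_zero]

lemma erfc_hasDerivAt {x : ℝ} (hx : 0 < x) :
    HasDerivAt erfc (-(2 / Real.sqrt π * Real.exp (-x ^ 2))) x := by
  have hd : HasDerivAt (fun u => ∫ t in (0:ℝ)..u, Real.exp (-t ^ 2)) (Real.exp (-x ^ 2)) x :=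
    intervalIntegral.integral_hasDerivAt_right gauss_integrable.intervalIntegrable
      ((Real.continuous_exp.comp (continuous_pow 2).neg).stronglyMeasurableAtFilter _ _)
      (Real.continuous_exp.comp (continuous_pow 2).neg).continuousAt
  have hd2 : HasDerivAt (fun u => erfc 0 - (2 / Real.sqrt π) * ∫ t in (0:ℝ)..u,
      Real.exp (-t ^ 2)) (-(2 / Real.sqrt π * Real.exp (-x ^ 2))) x :=
    (hd.const_mul (2 / Real.sqrt π)).const_sub (erfc 0)
  refine hd2.congr_of_eventuallyEq ?_
  filter_upwards [Ioi_mem_nhds hx] with y hy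
  exact erfc_eq y (le_of_lt hy)

lemma erfcx_hasDerivAt {x : ℝ} (hx : 0 < x) :
    HasDerivAt erfcx (2 * x * erfcx x - 2 / Real.sqrt π) x := by
  have h1 : HasDerivAt (fun y : ℝ => Real.exp (y ^ 2)) (2 * x * Real.exp (x ^ 2)) x := by
    have := (hasDerivAt_pow 2 x).exp
    convert this using 1
    simp [pow_one]; ring
  have h2 := h1.mul (erfc_hasDerivAt hx)
  have hx2 : Real.exp (x ^ 2) * Real.exp (-x ^ 2) = 1 := by
    rw [← Real.exp_add]; simp
  have : HasDerivAt erfcx (2 * x * Real.exp (x ^ 2) * erfc x +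
      Real.exp (x ^ 2) * -(2 / Real.sqrt π * Real.exp (-x ^ 2))) x := h2
  convert this using 1
  unfold erfcx
  linear_combination (2 / Real.sqrt π) * hx2

lemma integral_primitive_continuous :
    Continuous fun x : ℝ => ∫ t in (0:ℝ)..x, Real.exp (-t ^ 2) :=
  intervalIntegral.continuous_primitive (fun _ _ => gauss_integrable.intervalIntegrable) 0

lemma erfc_continuousOn : ContinuousOn erfc (Set.Ici 0) := by
  have hc : ContinuousOn (fun x => erfc 0 - (2 / Real.sqrt π) * ∫ t in (0:ℝ)..x,
      Real.exp (-t ^ 2)) (Set.Ici 0) :=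
    (continuous_const.sub (continuous_const.mul integral_primitive_continuous)).continuousOn
  exact hc.congr fun x hx => erfc_eq x hx

lemma erfcx_continuousOn : ContinuousOn erfcx (Set.Ici 0) :=
  ((Real.continuous_exp.comp (continuous_pow 2)).continuousOn).mul erfc_continuousOn

/-- for every `T > 0`, `φ` is integrable on `(0,T)` and
`∫_0^T φ(τ) dτ = 1 − erfcx(κ_a √(T/D))`. -/
theorem phi_integral_Ioo (D κa : ℝ) (hD : 0 < D) (hκa : 0 < κa) (T : ℝ) (hT : 0 < T) :
    IntegrableOn (phi D κa) (Set.Ioo 0 T) ∧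
      ∫ τ in Set.Ioo (0 : ℝ) T, phi D κa τ = 1 - erfcx (κa * Real.sqrt (T / D)) := by
  -- the inner function and its basic properties
  have hcont : Continuous fun τ : ℝ => κa * Real.sqrt (τ / D) :=
    continuous_const.mul (Real.continuous_sqrt.comp (continuous_id.div_const D))
  have hmaps : ∀ τ : ℝ, κa * Real.sqrt (τ / D) ∈ Set.Ici (0:ℝ) := fun τ =>
    mul_nonneg hκa.le (Real.sqrt_nonneg _)
  have hecont : Continuous fun τ : ℝ => erfcx (κa * Real.sqrt (τ / D)) :=
    erfcx_continuousOn.comp_continuous hcont hmaps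
  -- integrability of phi on Ioo 0 T
  have hπD : (0:ℝ) < π * D := mul_pos Real.pi_pos hD
  have hint1 : IntegrableOn (fun τ => κa / Real.sqrt (π * D * τ)) (Set.Ioo 0 T) := by
    have h := intervalIntegral.intervalIntegrable_rpow' (a := 0) (b := T) (r := -(1/2)) (by norm_num)
    rw [intervalIntegrable_iff, uIoc_of_le hT.le] at h
    have h2 : IntegrableOn (fun τ : ℝ => κa / Real.sqrt (π * D) * τ ^ (-(1/2) : ℝ))
        (Set.Ioo 0 T) := ((h.mono_set Set.Ioo_subset_Ioc_self).const_mul _)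
    refine h2.congr_fun ?_ measurableSet_Ioo
    intro τ hτ
    have hτ0 : (0:ℝ) < τ := hτ.1
    dsimp only
    have hs : Real.sqrt (π * D * τ) = Real.sqrt (π * D) * Real.sqrt τ :=
      Real.sqrt_mul hπD.le τ
    rw [hs, Real.rpow_neg hτ0.le, ← Real.sqrt_eq_rpow]
    have h1 : Real.sqrt (π * D) ≠ 0 := ne_of_gt (Real.sqrt_pos.mpr hπD)
    have h3 : Real.sqrt τ ≠ 0 := ne_of_gt (Real.sqrt_pos.mpr hτ0)
    field_simp
  have hint2 : IntegrableOn (fun τ => (κa ^ 2 / D) * erfcx (κa * Real.sqrt (τ / D)))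
      (Set.Ioo 0 T) :=
    ((continuous_const.mul hecont).integrableOn_Icc).mono_set Set.Ioo_subset_Icc_self
  have hintegrable : IntegrableOn (phi D κa) (Set.Ioo 0 T) := hint1.sub hint2
  refine ⟨hintegrable, ?_⟩
  -- the antiderivative
  set f : ℝ → ℝ := fun τ => -erfcx (κa * Real.sqrt (τ / D)) with hf
  have hfcont : Continuous f := hecont.neg
  -- derivative computation
  have hderiv : ∀ τ ∈ Set.Ioo (0:ℝ) T, HasDerivAt f (phi D κa τ) τ := by
    intro τ hτ
    have hτ0 : (0:ℝ) < τ := hτ.1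
    have hτD : (0:ℝ) < τ / D := div_pos hτ0 hD
    have hsD : (0:ℝ) < Real.sqrt D := Real.sqrt_pos.mpr hD
    have hsτ : (0:ℝ) < Real.sqrt τ := Real.sqrt_pos.mpr hτ0
    have hsπ : (0:ℝ) < Real.sqrt π := Real.sqrt_pos.mpr Real.pi_pos
    have hinner : HasDerivAt (fun τ : ℝ => κa * Real.sqrt (τ / D))
        (κa * ((1 / D) / (2 * Real.sqrt (τ / D)))) τ := by
      have hdiv : HasDerivAt (fun τ : ℝ => τ / D) (1 / D) τ := by
        simpa using (hasDerivAt_id τ).div_const D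
      exact (hdiv.sqrt (ne_of_gt hτD)).const_mul κa
    have hpos : 0 < κa * Real.sqrt (τ / D) :=
      mul_pos hκa (Real.sqrt_pos.mpr hτD)
    have hcomp := (erfcx_hasDerivAt hpos).comp τ hinner
    have hneg := hcomp.neg
    have heq : -((2 * (κa * Real.sqrt (τ / D)) * erfcx (κa * Real.sqrt (τ / D)) -
        2 / Real.sqrt π) * (κa * ((1 / D) / (2 * Real.sqrt (τ / D))))) = phi D κa τ := by
      unfold phi
      have h1 : Real.sqrt (τ / D) = Real.sqrt τ / Real.sqrt D := Real.sqrt_div hτ0.le D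
      have h2 : Real.sqrt (π * D * τ) = Real.sqrt π * (Real.sqrt D * Real.sqrt τ) := by
        rw [mul_assoc, Real.sqrt_mul Real.pi_pos.le, Real.sqrt_mul hD.le]
      have hb2 : Real.sqrt D ^ 2 = D := Real.sq_sqrt hD.le
      rw [h1, h2]
      have hbne : Real.sqrt D ≠ 0 := ne_of_gt hsD
      have hane : Real.sqrt τ ≠ 0 := ne_of_gt hsτ
      have hpne : Real.sqrt π ≠ 0 := ne_of_gt hsπ
      have hDne : D ≠ 0 := ne_of_gt hD
      field_simp
      linear_combination hb2
    rw [heq] at hneg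
    exact hneg
  -- FTC with limits at the endpoints
  have hint' : IntervalIntegrable (phi D κa) volume 0 T := by
    rw [intervalIntegrable_iff, uIoc_of_le hT.le,
      integrableOn_Ioc_iff_integrableOn_Ioo]
    exact hintegrable
  have hlim0 : Filter.Tendsto f (nhdsWithin 0 (Set.Ioi 0)) (nhds (-1)) := by
    have h0 : f 0 = -1 := by
      simp only [hf]
      rw [zero_div, Real.sqrt_zero, mul_zero, erfcx_zero]
    have := (hfcont.tendsto 0).mono_left (nhdsWithin_le_nhds (s := Set.Ioi 0))
    rwa [h0] at this
  have hlimT : Filter.Tendsto f (nhdsWithin T (Set.Iio T)) (nhds (-erfcx (κa * Real.sqrt (T / D)))) :=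
    (hfcont.tendsto T).mono_left (nhdsWithin_le_nhds (s := Set.Iio T))
  have key := intervalIntegral.integral_eq_sub_of_hasDerivAt_of_tendsto hT hderiv hint'
    hlim0 hlimT
  rw [intervalIntegral.integral_of_le hT.le, MeasureTheory.integral_Ioc_eq_integral_Ioo] at key
  rw [key]; ring
end

section
/- For every a ≥ 0 and s > 0, ∫_0^∞ e^{−st}·(πt)^{-1/2}·exp(−a²/(4t)) dt = e^{−a·√s}/√s. -/
open Real MeasureTheory Set

section aux
variable (α β : ℝ)

private noncomputable def Wf (α β v : ℝ) : ℝ := Real.sqrt (v ^ 2 + 4 * α * β)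
private noncomputable def Pf (α β v : ℝ) : ℝ := (v + Wf α β v) / (2 * α)

variable (hα : 0 < α) (hβ : 0 < β)
include hα hβ

private lemma Wf_pos (v : ℝ) : 0 < Wf α β v := Real.sqrt_pos.2 (by positivity)

private lemma Wf_sq (v : ℝ) : Wf α β v ^ 2 = v ^ 2 + 4 * α * β :=
  Real.sq_sqrt (by positivity)

private lemma Wf_gt (v : ℝ) : -v < Wf α β v := by
  have h1 : |v| < Wf α β v := by
    rw [← Real.sqrt_sq_eq_abs]
    exact Real.sqrt_lt_sqrt (sq_nonneg v) (by nlinarith)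
  calc -v ≤ |v| := neg_le_abs v
    _ < _ := h1

private lemma Pf_pos (v : ℝ) : 0 < Pf α β v :=
  div_pos (by linarith [Wf_gt α β hα hβ v]) (by linarith)

private lemma Pf_quad (v : ℝ) : α * Pf α β v ^ 2 = v * Pf α β v + β := by
  have h := Wf_sq α β hα hβ v
  unfold Pf
  field_simp
  linear_combination h

private lemma Pf_key (v : ℝ) :
    α ^ 2 * Pf α β v ^ 2 + β ^ 2 / Pf α β v ^ 2 = v ^ 2 + 2 * α * β := by
  obtain ⟨p, hp⟩ : ∃ p, p = Pf α β v := ⟨_, rfl⟩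
  have h1 : 0 < p := hp ▸ Pf_pos α β hα hβ v
  have h2 : α * p ^ 2 = v * p + β := hp ▸ Pf_quad α β hα hβ v
  rw [← hp]
  have h4 : p ^ 2 ≠ 0 := by positivity
  field_simp
  linear_combination (α * p ^ 2 + v * p - β) * h2

private lemma Pf_deriv (v : ℝ) :
    HasDerivAt (Pf α β) ((1 + v / Wf α β v) / (2 * α)) v := by
  have h1 : HasDerivAt (fun v : ℝ => v ^ 2 + 4 * α * β) (2 * v) v := by
    simpa using (hasDerivAt_pow 2 v).add_const (4 * α * β)
  have h2 : HasDerivAt (Wf α β) (1 / (2 * Real.sqrt (v ^ 2 + 4 * α * β)) * (2 * v)) v :=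
    (Real.hasDerivAt_sqrt (by positivity)).comp v h1
  have h3 : HasDerivAt (Wf α β) (v / Wf α β v) v := by
    convert h2 using 1
    unfold Wf
    field_simp
  have h4 : HasDerivAt (fun v => v + Wf α β v) (1 + v / Wf α β v) v :=
    (hasDerivAt_id v).add h3
  exact h4.div_const (2 * α)

end aux

section aux2
variable {α β : ℝ} (hα : 0 < α) (hβ : 0 < β)
include hα hβ

private lemma Pf_inj : Function.Injective (fun v => Pf α β v ^ 2) := by
  intro v₁ v₂ h
  simp only at h
  have hp : Pf α β v₁ = Pf α β v₂ := by
    nlinarith [Pf_pos α β hα hβ v₁, Pf_pos α β hα hβ v₂]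
  have h1 := Pf_quad α β hα hβ v₁
  have h2 := Pf_quad α β hα hβ v₂
  rw [hp] at h1
  have hne : Pf α β v₂ ≠ 0 := ne_of_gt (Pf_pos α β hα hβ v₂)
  have : v₁ * Pf α β v₂ = v₂ * Pf α β v₂ := by linarith [h2]
  exact mul_right_cancel₀ hne this

private lemma Pf_surj : (fun v => Pf α β v ^ 2) '' Set.univ = Set.Ioi 0 := by
  apply Set.Subset.antisymm
  · rintro t ⟨v, -, rfl⟩
    exact pow_pos (Pf_pos α β hα hβ v) 2
  · intro t ht
    have ht0 : (0:ℝ) < t := ht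
    set u := Real.sqrt t with hu
    have hu0 : 0 < u := Real.sqrt_pos.2 ht0
    refine ⟨α * u - β / u, Set.mem_univ _, ?_⟩
    have hW : Wf α β (α * u - β / u) = α * u + β / u := by
      unfold Wf
      rw [show (α * u - β / u) ^ 2 + 4 * α * β = (α * u + β / u) ^ 2 by
        field_simp; ring]
      exact Real.sqrt_sq (by positivity)
    have hP : Pf α β (α * u - β / u) = u := by
      unfold Pf
      rw [hW]
      field_simp
      ring
    simp only [hP]
    rw [hu, Real.sq_sqrt ht0.le]

end aux2

private lemma gauss_full : ∫ v : ℝ, Real.exp (-v ^ 2) = Real.sqrt π := by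
  simpa using integral_gaussian 1

private lemma odd_part {c : ℝ} (hc : 0 < c) :
    ∫ v : ℝ, v / Real.sqrt (v ^ 2 + c) * Real.exp (-v ^ 2) = 0 := by
  have h := MeasureTheory.integral_neg_eq_self
    (fun v : ℝ => v / Real.sqrt (v ^ 2 + c) * Real.exp (-v ^ 2)) (volume : Measure ℝ)
  simp only [neg_sq, neg_div, neg_mul] at h
  rw [MeasureTheory.integral_neg] at h
  linarith

private lemma odd_int {c : ℝ} (hc : 0 < c) :
    Integrable (fun v : ℝ => v / Real.sqrt (v ^ 2 + c) * Real.exp (-v ^ 2)) := by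
  have hg : Integrable (fun v : ℝ => Real.exp (-(1:ℝ) * v ^ 2)) :=
    integrable_exp_neg_mul_sq one_pos
  refine hg.mono ?_ ?_
  · exact ((Continuous.div continuous_id (by continuity)
      (fun v => ne_of_gt (Real.sqrt_pos.2 (by positivity)))).mul (by continuity)).aestronglyMeasurable
  · refine Filter.Eventually.of_forall fun v => ?_
    have h1 : |v| ≤ Real.sqrt (v ^ 2 + c) := by
      rw [← Real.sqrt_sq_eq_abs]
      exact Real.sqrt_le_sqrt (by linarith)
    have h2 : (0:ℝ) < Real.sqrt (v ^ 2 + c) := Real.sqrt_pos.2 (by positivity)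
    simp only [norm_mul, norm_div, Real.norm_eq_abs, Real.abs_exp, neg_one_mul]
    calc |v| / |Real.sqrt (v ^ 2 + c)| * Real.exp (-v ^ 2) ≤ 1 * Real.exp (-v ^ 2) := by
          apply mul_le_mul_of_nonneg_right _ (Real.exp_nonneg _)
          rw [abs_of_pos h2, div_le_one h2]; exact h1
      _ = Real.exp (-v ^ 2) := one_mul _

private lemma aux_integral {α β : ℝ} (hα : 0 < α) (hβ : 0 < β) :
    ∫ t in Set.Ioi (0 : ℝ),
        Real.exp (-α ^ 2 * t) * ((Real.sqrt (π * t))⁻¹ * Real.exp (-β ^ 2 / t)) =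
      Real.exp (-(2 * α * β)) / α := by
  have hπ : (0:ℝ) < Real.sqrt π := Real.sqrt_pos.2 pi_pos
  have key := integral_image_eq_integral_abs_deriv_smul (s := (Set.univ : Set ℝ))
    (f := fun v => Pf α β v ^ 2)
    (f' := fun v => 2 * Pf α β v * ((1 + v / Wf α β v) / (2 * α)))
    MeasurableSet.univ
    (fun x _ => (((Pf_deriv α β hα hβ x).pow 2).congr_deriv
      (by push_cast; ring)).hasDerivWithinAt)
    ((Pf_inj hα hβ).injOn)
    (fun t => Real.exp (-α ^ 2 * t) * ((Real.sqrt (π * t))⁻¹ * Real.exp (-β ^ 2 / t)))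
  rw [← Pf_surj hα hβ, key, MeasureTheory.setIntegral_univ]
  have heq : (fun v : ℝ => |2 * Pf α β v * ((1 + v / Wf α β v) / (2 * α))| •
        (Real.exp (-α ^ 2 * (Pf α β v ^ 2)) *
          ((Real.sqrt (π * Pf α β v ^ 2))⁻¹ * Real.exp (-β ^ 2 / Pf α β v ^ 2)))) =
      fun v : ℝ => (Real.exp (-(2 * α * β)) / (Real.sqrt π * α)) *
        (Real.exp (-v ^ 2) + v / Real.sqrt (v ^ 2 + 4 * α * β) * Real.exp (-v ^ 2)) := by
    funext v
    have hp : 0 < Pf α β v := Pf_pos α β hα hβ v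
    have hW : 0 < Wf α β v := Wf_pos α β hα hβ v
    have hd : 0 < (1 + v / Wf α β v) / (2 * α) := by
      apply div_pos _ (by linarith)
      have : -1 < v / Wf α β v := by
        rw [lt_div_iff₀ hW]; linarith [Wf_gt α β hα hβ v]
      linarith
    have habs : |2 * Pf α β v * ((1 + v / Wf α β v) / (2 * α))| =
        2 * Pf α β v * ((1 + v / Wf α β v) / (2 * α)) :=
      abs_of_pos (by positivity)
    have hsqrt : Real.sqrt (π * Pf α β v ^ 2) = Real.sqrt π * Pf α β v := by
      rw [Real.sqrt_mul pi_pos.le, Real.sqrt_sq hp.le]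
    have hexp : Real.exp (-α ^ 2 * Pf α β v ^ 2) * Real.exp (-β ^ 2 / Pf α β v ^ 2) =
        Real.exp (-v ^ 2) * Real.exp (-(2 * α * β)) := by
      rw [← Real.exp_add, ← Real.exp_add]
      congr 1
      have := Pf_key α β hα hβ v
      have h2 : -β ^ 2 / Pf α β v ^ 2 = -(β ^ 2 / Pf α β v ^ 2) := by ring
      rw [h2]
      nlinarith [this]
    have hWdef : Wf α β v = Real.sqrt (v ^ 2 + 4 * α * β) := rfl
    rw [smul_eq_mul, habs, hsqrt]
    rw [show Real.exp (-α ^ 2 * Pf α β v ^ 2) *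
        ((Real.sqrt π * Pf α β v)⁻¹ * Real.exp (-β ^ 2 / Pf α β v ^ 2)) =
        (Real.sqrt π * Pf α β v)⁻¹ *
          (Real.exp (-α ^ 2 * Pf α β v ^ 2) * Real.exp (-β ^ 2 / Pf α β v ^ 2)) by ring,
      hexp, ← hWdef]
    field_simp
  rw [heq, MeasureTheory.integral_const_mul,
    MeasureTheory.integral_add (by simpa using integrable_exp_neg_mul_sq one_pos)
      (odd_int (by positivity)),
    gauss_full, odd_part (by positivity : (0:ℝ) < 4 * α * β), add_zero]
  field_simp

/-- for every `a ≥ 0` and `s > 0`, the Laplace transform in time of the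
one-dimensional heat kernel `t ↦ (πt)^{-1/2} exp(−a²/(4t))` is `e^{−a√s}/√s`. -/
theorem laplace_heat_kernel (a s : ℝ) (ha : 0 ≤ a) (hs : 0 < s) :
    ∫ t in Set.Ioi (0 : ℝ),
        Real.exp (-s * t) * ((Real.sqrt (π * t))⁻¹ * Real.exp (-a ^ 2 / (4 * t))) =
      Real.exp (-a * Real.sqrt s) / Real.sqrt s := by
  rcases eq_or_lt_of_le ha with rfl | ha0
  · -- case a = 0
    have himg : (fun u : ℝ => u ^ 2) '' Set.Ioi 0 = Set.Ioi 0 := by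
      ext t
      constructor
      · rintro ⟨u, hu, rfl⟩; exact pow_pos (Set.mem_Ioi.mp hu) 2
      · intro ht; exact ⟨Real.sqrt t, Real.sqrt_pos.2 ht, Real.sq_sqrt (le_of_lt ht)⟩
    have key := integral_image_eq_integral_abs_deriv_smul (f := fun u : ℝ => u ^ 2)
      (f' := fun u : ℝ => 2 * u) (measurableSet_Ioi : MeasurableSet (Set.Ioi (0:ℝ)))
      (fun x _ => ((hasDerivAt_pow 2 x).congr_deriv (by ring)).hasDerivWithinAt)
      (fun x hx y hy h => by
        simp only [Set.mem_Ioi] at hx hy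
        simp only at h
        nlinarith)
      (fun t => Real.exp (-s * t) * ((Real.sqrt (π * t))⁻¹ * Real.exp (-(0:ℝ) ^ 2 / (4 * t))))
    rw [← himg, key]
    rw [MeasureTheory.setIntegral_congr_fun measurableSet_Ioi
      (g := fun u : ℝ => (2 / Real.sqrt π) * Real.exp (-s * u ^ 2))]
    · rw [MeasureTheory.integral_const_mul, integral_gaussian_Ioi s,
        Real.sqrt_div pi_pos.le s, neg_zero, zero_mul, Real.exp_zero]
      have h1 : Real.sqrt π ≠ 0 := ne_of_gt (Real.sqrt_pos.2 pi_pos)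
      field_simp
    · intro u hu
      have hu0 : (0:ℝ) < u := hu
      have hπu : Real.sqrt (π * u ^ 2) = Real.sqrt π * u := by
        rw [Real.sqrt_mul pi_pos.le, Real.sqrt_sq hu0.le]
      have hπ : Real.sqrt π ≠ 0 := ne_of_gt (Real.sqrt_pos.2 pi_pos)
      simp only [smul_eq_mul, hπu, abs_of_pos (by linarith : (0:ℝ) < 2 * u)]
      rw [show (-(0:ℝ)^2) = 0 by norm_num, zero_div, Real.exp_zero]
      field_simp
  · -- case a > 0
    have hα : (0:ℝ) < Real.sqrt s := Real.sqrt_pos.2 hs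
    have hβ : (0:ℝ) < a / 2 := by linarith
    have h := aux_integral hα hβ
    rw [Real.sq_sqrt hs.le] at h
    rw [MeasureTheory.setIntegral_congr_fun measurableSet_Ioi
      (g := fun t : ℝ => Real.exp (-s * t) *
        ((Real.sqrt (π * t))⁻¹ * Real.exp (-(a / 2) ^ 2 / t)))]
    · rw [h]
      congr 1
      ring
    · intro t ht
      have ht0 : (0:ℝ) < t := ht
      have harg : -a ^ 2 / (4 * t) = -(a / 2) ^ 2 / t := by ring
      simp only [harg]
end

section
/- Let f : ℝ → [0,∞) be measurable, vanishing on (−∞,0), with ∫_ℝ f ≤ 1 and ‖f‖_{L²(ℝ)} < ∞. Then for every natural number j ≥ 2 and every τ ∈ ℝ, the j-th convolution power satisfies f^{j*}(τ) ≤ ‖f‖_{L²(ℝ)}². -/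
open Real MeasureTheory Set

/-- Convolution powers of a function `f : ℝ → ℝ`: `f^{1*} = f` and
`f^{(j+1)*}(τ) = ∫ f^{j*}(x) f(τ−x) dx`.  `convPow f 0` is a junk value. -/
noncomputable def convPow (f : ℝ → ℝ) : ℕ → ℝ → ℝ
  | 0 => fun _ => 0
  | 1 => f
  | (n + 2) => fun τ => ∫ x, convPow f (n + 1) x * f (τ - x)

/-- `poissonPMFReal'`: the pmf of a Poisson random variable with mean `λ`,
`p[j;λ] = λ^j e^{−λ}/j!`. -/
noncomputable def pois (j : ℕ) (l : ℝ) : ℝ := l ^ j * Real.exp (-l) / j.factorial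

/-- if `f ≥ 0` vanishes on `(−∞,0)`, `∫ f ≤ 1` and `‖f‖₂ < ∞`, then for every
`j ≥ 2` and every `τ`, `f^{j*}(τ) ≤ ‖f‖₂² = ∫ f²`. -/
theorem convPow_le_sq_norm (f : ℝ → ℝ) (hf_meas : Measurable f)
    (hf_nonneg : ∀ x, 0 ≤ f x) (hf_zero : ∀ x < (0 : ℝ), f x = 0)
    (hf_int : Integrable f) (hf_mass : ∫ x, f x ≤ 1)
    (hf_sq : Integrable (fun x => f x ^ 2))
    (j : ℕ) (hj : 2 ≤ j) (τ : ℝ) :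
    convPow f j τ ≤ ∫ x, f x ^ 2 := by
  set M : ℝ := ∫ x, f x ^ 2 with hM
  have hM0 : 0 ≤ M := integral_nonneg fun x => sq_nonneg _
  obtain ⟨n, rfl⟩ : ∃ n, j = n + 2 := ⟨j - 2, by omega⟩
  clear hj
  induction n generalizing τ with
  | zero =>
    have heq : convPow f 2 τ = ∫ x, f x * f (τ - x) := by
      show (∫ x, convPow f 1 x * f (τ - x)) = _
      rfl
    rw [heq]
    by_cases hint : Integrable (fun x => f x * f (τ - x))
    · have hsq2 : Integrable (fun x => f (τ - x) ^ 2) :=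
        (Integrable.comp_sub_left hf_sq τ : _)
      have hbound : Integrable (fun x => (f x ^ 2 + f (τ - x) ^ 2) / 2) :=
        (hf_sq.add hsq2).div_const 2
      have h1 : (∫ x, f x * f (τ - x)) ≤ ∫ x, (f x ^ 2 + f (τ - x) ^ 2) / 2 := by
        apply integral_mono hint hbound
        intro x
        have := sq_nonneg (f x - f (τ - x))
        simp only
        nlinarith
      have h2 : (∫ x, (f x ^ 2 + f (τ - x) ^ 2) / 2) = M := by
        rw [integral_div]
        rw [integral_add hf_sq hsq2]
        have : (∫ x, f (τ - x) ^ 2) = ∫ x, f x ^ 2 :=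
          integral_sub_left_eq_self (fun x => f x ^ 2) volume τ
        rw [this, hM]
        ring
      linarith
    · rw [integral_undef hint]; exact hM0
  | succ n ih =>
    have heq : convPow f (n + 3) τ = ∫ x, convPow f (n + 2) x * f (τ - x) := rfl
    rw [heq]
    by_cases hint : Integrable (fun x => convPow f (n + 2) x * f (τ - x))
    · have hbound : Integrable (fun x => M * f (τ - x)) :=
        ((Integrable.comp_sub_left hf_int τ : _)).const_mul M
      have h1 : (∫ x, convPow f (n + 2) x * f (τ - x)) ≤ ∫ x, M * f (τ - x) := by
        apply integral_mono hint hbound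
        intro x
        have h2 := ih x
        have h3 := hf_nonneg (τ - x)
        by_cases h4 : 0 ≤ convPow f (n + 2) x
        · exact mul_le_mul_of_nonneg_right h2 h3
        · push_neg at h4
          calc convPow f (n + 2) x * f (τ - x) ≤ 0 :=
                mul_nonpos_of_nonpos_of_nonneg h4.le h3
            _ ≤ M * f (τ - x) := mul_nonneg hM0 h3
      have h2 : (∫ x, M * f (τ - x)) = M * ∫ x, f x := by
        rw [integral_const_mul, integral_sub_left_eq_self f volume τ]
      have h3 : M * ∫ x, f x ≤ M * 1 := mul_le_mul_of_nonneg_left hf_mass hM0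
      rw [h2] at h1
      linarith
    · rw [integral_undef hint]; exact hM0
end

section
/- Let f : ℝ → [0,∞) be measurable, vanishing on (−∞,0), with ∫_ℝ f ≤ 1 and ‖f‖_{L²(ℝ)} < ∞, let κ_d ≥ 0, T > 0 and ε > 0, and let J ≥ 2 be a natural number such that Σ_{j=J−1}^∞ p[j; κ_d·T] ≤ ε/‖f‖_{L²(ℝ)}². Then for all τ, t with 0 ≤ τ ≤ t ≤ T, the truncation error of the series characterizing the observation model satisfies Σ_{j=J}^∞ f^{j*}(τ)·p[j−1; κ_d·(t−τ)] ≤ ε. -/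
open Real MeasureTheory Set

lemma pois_nonneg (j : ℕ) {l : ℝ} (hl : 0 ≤ l) : 0 ≤ pois j l := by
  unfold pois
  positivity

lemma summable_pois (l : ℝ) : Summable (fun j => pois j l) := by
  have := (Real.summable_pow_div_factorial l).mul_right (Real.exp (-l))
  apply this.congr
  intro j
  simp [pois]; ring

lemma tsum_pois (l : ℝ) : ∑' j, pois j l = 1 := by
  have h : (fun j : ℕ => pois j l) = fun j => l ^ j / j.factorial * Real.exp (-l) := by
    funext j; simp [pois]; ring
  rw [h, tsum_mul_right]
  have : ∑' j : ℕ, l ^ j / (j.factorial : ℝ) = Real.exp l := by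
    rw [Real.exp_eq_exp_ℝ, NormedSpace.exp_eq_tsum_div]
  rw [this, ← Real.exp_add]
  simp

lemma hasDerivAt_pois_zero (x : ℝ) : HasDerivAt (fun l => pois 0 l) (-pois 0 x) x := by
  have h : (fun l => pois 0 l) = fun l => Real.exp (-l) := by
    funext l; simp [pois]
  rw [h]
  have := (Real.hasDerivAt_exp (-x)).comp x (hasDerivAt_neg x)
  simpa [pois] using (hasDerivAt_neg x).exp

lemma hasDerivAt_pois_succ (j : ℕ) (x : ℝ) :
    HasDerivAt (fun l => pois (j+1) l) (pois j x - pois (j+1) x) x := by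
  have h1 : HasDerivAt (fun l : ℝ => l ^ (j+1)) ((j+1 : ℕ) * x ^ j) x := by
    simpa using hasDerivAt_pow (j+1) x
  have h2 : HasDerivAt (fun l : ℝ => Real.exp (-l)) (-Real.exp (-x)) x := by
    simpa using (hasDerivAt_neg x).exp
  have h3 := (h1.mul h2).div_const ((j+1).factorial : ℝ)
  refine h3.congr_deriv ?_
  have hfac : ((j+1).factorial : ℝ) = (j+1) * j.factorial := by
    push_cast [Nat.factorial_succ]; ring
  have hj : (j.factorial : ℝ) ≠ 0 := Nat.cast_ne_zero.mpr j.factorial_ne_zero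
  have hj1 : ((j+1).factorial : ℝ) ≠ 0 := Nat.cast_ne_zero.mpr (j+1).factorial_ne_zero
  simp only [pois]
  rw [hfac]
  push_cast
  field_simp
  ring

lemma hasDerivAt_poisSum (k : ℕ) (x : ℝ) :
    HasDerivAt (fun l => ∑ j ∈ Finset.range (k+1), pois j l) (-pois k x) x := by
  induction k with
  | zero => simpa using hasDerivAt_pois_zero x
  | succ k ih =>
    have h : (fun l => ∑ j ∈ Finset.range (k+2), pois j l)
        = fun l => (∑ j ∈ Finset.range (k+1), pois j l) + pois (k+1) l := by
      funext l; rw [Finset.sum_range_succ]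
    rw [h]
    have := ih.add (hasDerivAt_pois_succ k x)
    refine this.congr_deriv ?_
    ring


lemma poisSum_anti (k : ℕ) :
    AntitoneOn (fun l => ∑ j ∈ Finset.range (k+1), pois j l) (Ici (0:ℝ)) := by
  apply antitoneOn_of_deriv_nonpos (convex_Ici 0)
  · exact fun x _ => ((hasDerivAt_poisSum k x).continuousAt).continuousWithinAt
  · intro x hx
    exact (hasDerivAt_poisSum k x).differentiableAt.differentiableWithinAt
  · intro x hx
    rw [(hasDerivAt_poisSum k x).deriv]
    simp only [interior_Ici, mem_Ioi] at hx
    simpa using pois_nonneg k hx.le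

lemma pois_tail_mono (k : ℕ) {μ lam : ℝ} (h0 : 0 ≤ μ) (h : μ ≤ lam) :
    ∑' j, pois (k+1+j) μ ≤ ∑' j, pois (k+1+j) lam := by
  have key : ∀ l : ℝ, ∑' j, pois (k+1+j) l = 1 - ∑ j ∈ Finset.range (k+1), pois j l := by
    intro l
    have := Summable.sum_add_tsum_nat_add (f := fun j => pois j l) (k+1) (summable_pois l)
    rw [tsum_pois] at this
    have h2 : (∑' j, pois (k+1+j) l) = ∑' j : ℕ, pois (j + (k+1)) l := by
      congr 1; funext j; rw [Nat.add_comm]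
    rw [h2]; linarith
  rw [key μ, key lam]
  have := poisSum_anti k (mem_Ici.mpr h0) (mem_Ici.mpr (h0.trans h)) h
  linarith


lemma convPow_nonneg (f : ℝ → ℝ) (hf_nonneg : ∀ x, 0 ≤ f x) : ∀ n τ, 0 ≤ convPow f n τ
  | 0, _ => le_refl 0
  | 1, τ => hf_nonneg τ
  | (n+2), τ => by
      show 0 ≤ ∫ x, convPow f (n+1) x * f (τ - x)
      exact integral_nonneg fun x => mul_nonneg (convPow_nonneg f hf_nonneg (n+1) x) (hf_nonneg _)

lemma convPow_le (f : ℝ → ℝ) (hf_nonneg : ∀ x, 0 ≤ f x)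
    (hf_int : Integrable f) (hf_mass : ∫ x, f x ≤ 1)
    (hf_sq : Integrable (fun x => f x ^ 2)) :
    ∀ n τ, convPow f (n+2) τ ≤ ∫ x, f x ^ 2 := by
  have hM : 0 ≤ ∫ x, f x ^ 2 := integral_nonneg fun x => sq_nonneg _
  intro n
  induction n with
  | zero =>
    intro τ
    show (∫ x, convPow f 1 x * f (τ - x)) ≤ _
    have hle : ∀ x, convPow f 1 x * f (τ - x) ≤ (f x ^ 2 + f (τ - x) ^ 2) / 2 := by
      intro x
      show f x * f (τ - x) ≤ _
      nlinarith [sq_nonneg (f x - f (τ - x))]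
    have hint : Integrable (fun x => (f x ^ 2 + f (τ - x) ^ 2) / 2) :=
      (hf_sq.add ((hf_sq.comp_sub_left τ))).div_const 2
    calc (∫ x, convPow f 1 x * f (τ - x))
        ≤ ∫ x, (f x ^ 2 + f (τ - x) ^ 2) / 2 := by
          apply integral_mono_of_nonneg
          · exact Filter.Eventually.of_forall fun x =>
              mul_nonneg (hf_nonneg x) (hf_nonneg _)
          · exact hint
          · exact Filter.Eventually.of_forall hle
      _ = ∫ x, f x ^ 2 := by
          rw [integral_div, integral_add hf_sq (hf_sq.comp_sub_left τ),
            integral_sub_left_eq_self (fun x => f x ^ 2) volume τ]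
          ring
  | succ n ih =>
    intro τ
    show (∫ x, convPow f (n+2) x * f (τ - x)) ≤ _
    calc (∫ x, convPow f (n+2) x * f (τ - x))
        ≤ ∫ x, (∫ y, f y ^ 2) * f (τ - x) := by
          apply integral_mono_of_nonneg
          · exact Filter.Eventually.of_forall fun x =>
              mul_nonneg (convPow_nonneg f hf_nonneg _ x) (hf_nonneg _)
          · exact (hf_int.comp_sub_left τ).const_mul _
          · exact Filter.Eventually.of_forall fun x =>
              mul_le_mul_of_nonneg_right (ih x) (hf_nonneg _)
      _ = (∫ y, f y ^ 2) * ∫ x, f x := by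
          rw [MeasureTheory.integral_const_mul, integral_sub_left_eq_self f volume τ]
      _ ≤ ∫ y, f y ^ 2 := mul_le_of_le_one_right hM hf_mass

/-- truncation error bound for the series characterizing the observation
model: if `J ≥ 2` and `Σ_{j=J−1}^∞ p[j; κ_d T] ≤ ε/‖f‖₂²`, then for all `0 ≤ τ ≤ t ≤ T`,
`Σ_{j=J}^∞ f^{j*}(τ) p[j−1; κ_d(t−τ)] ≤ ε`. -/
theorem truncation_error_le (f : ℝ → ℝ) (hf_meas : Measurable f)
    (hf_nonneg : ∀ x, 0 ≤ f x) (hf_zero : ∀ x < (0 : ℝ), f x = 0)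
    (hf_int : Integrable f) (hf_mass : ∫ x, f x ≤ 1)
    (hf_sq : Integrable (fun x => f x ^ 2))
    (κd T ε : ℝ) (hκd : 0 ≤ κd) (hT : 0 < T) (hε : 0 < ε)
    (J : ℕ) (hJ : 2 ≤ J)
    (hJ_tail : ∑' j : ℕ, pois (J - 1 + j) (κd * T) ≤ ε / ∫ x, f x ^ 2)
    (τ t : ℝ) (hτ : 0 ≤ τ) (hτt : τ ≤ t) (htT : t ≤ T) :
    ∑' j : ℕ, convPow f (J + j) τ * pois (J + j - 1) (κd * (t - τ)) ≤ ε := by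
  have hM : 0 ≤ ∫ x, f x ^ 2 := integral_nonneg fun x => sq_nonneg _
  obtain ⟨K, rfl⟩ : ∃ K, J = K + 2 := ⟨J - 2, by omega⟩
  have hl0 : 0 ≤ κd * (t - τ) := mul_nonneg hκd (by linarith)
  have hlT : κd * (t - τ) ≤ κd * T := mul_le_mul_of_nonneg_left (by linarith) hκd
  have hterm : ∀ j : ℕ, convPow f (K + 2 + j) τ * pois (K + 2 + j - 1) (κd * (t - τ))
      ≤ (∫ x, f x ^ 2) * pois (K + 1 + j) (κd * (t - τ)) := by
    intro j
    have h2 : K + 2 + j = (K + j) + 2 := by omega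
    have h1 : K + 2 + j - 1 = K + 1 + j := by omega
    rw [h1, h2]
    exact mul_le_mul_of_nonneg_right (convPow_le f hf_nonneg hf_int hf_mass hf_sq (K+j) τ)
      (pois_nonneg _ hl0)
  have hsumtail : ∀ l : ℝ, Summable (fun j : ℕ => pois (K + 1 + j) l) := by
    intro l
    exact ((summable_nat_add_iff (K+1)).mpr (summable_pois l)).congr
      (fun j => by rw [Nat.add_comm])
  have hsumR : Summable (fun j : ℕ => (∫ x, f x ^ 2) * pois (K + 1 + j) (κd * (t - τ))) :=
    (hsumtail _).mul_left _
  have hsumL : Summable (fun j : ℕ =>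
      convPow f (K + 2 + j) τ * pois (K + 2 + j - 1) (κd * (t - τ))) :=
    Summable.of_nonneg_of_le
      (fun j => mul_nonneg (convPow_nonneg f hf_nonneg _ τ) (pois_nonneg _ hl0)) hterm hsumR
  have htail1 : ∑' j : ℕ, pois (K + 1 + j) (κd * T) ≤ ε / ∫ x, f x ^ 2 := by
    have : K + 2 - 1 = K + 1 := by omega
    rwa [this] at hJ_tail
  calc ∑' j : ℕ, convPow f (K + 2 + j) τ * pois (K + 2 + j - 1) (κd * (t - τ))
      ≤ ∑' j : ℕ, (∫ x, f x ^ 2) * pois (K + 1 + j) (κd * (t - τ)) :=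
        Summable.tsum_le_tsum hterm hsumL hsumR
    _ = (∫ x, f x ^ 2) * ∑' j : ℕ, pois (K + 1 + j) (κd * (t - τ)) := tsum_mul_left
    _ ≤ (∫ x, f x ^ 2) * ∑' j : ℕ, pois (K + 1 + j) (κd * T) :=
        mul_le_mul_of_nonneg_left (pois_tail_mono K hl0 hlT) hM
    _ ≤ (∫ x, f x ^ 2) * (ε / ∫ x, f x ^ 2) := mul_le_mul_of_nonneg_left htail1 hM
    _ ≤ ε := by
        rcases hM.eq_or_lt with h | h
        · rw [← h]; simpa using hε.le
        · rw [mul_comm, div_mul_cancel₀ _ (ne_of_gt h)]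
end
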